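/- Assume γ* < α + β and, in the case γ = 0, that ℓ is almost increasing on (0,1] (f is almost increasing if there is C ≥ 1 with f(r) ≥ C⁻¹ sup_{s∈(0,r]} f(s)). Then there exists a constant C > 0, independent of r, x, t, k, such that for every r ∈ (0, diam(D)), every x ∈ D with δ_D(x) < 5r, every t ∈ (0, r^α] and every k > 0: ∫ over B(x,r)∩D of (t^{−d/α} ∧ t·|x−z|^{−d−α}) · Φ(δ_D(x,t)/|x−z|) · Ψ(δ_D(z)/r) · ℓ(δ_D(z)/k) dz ≤ C · Ψ(δ_D(x,t)/r) · ℓ(δ_D(x,t)/k), where δ_D(x,t) := δ_D(x) ∨ t^{1/α}. -/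

import Mathlib

open Set Metric MeasureTheory Real Filter Topology

noncomputable section

/-- `f` satisfies the lower scaling condition at zero with index `b`. -/
def HasLowerScaling (f : ℝ → ℝ) (b : ℝ) : Prop :=
  ∃ C : ℝ, 1 ≤ C ∧ ∀ s r : ℝ, 0 < s → s ≤ r → r ≤ 1 → C⁻¹ * (r / s) ^ b ≤ f r / f s

/-- `f` satisfies the upper scaling condition at zero with index `b`. -/
def HasUpperScaling (f : ℝ → ℝ) (b : ℝ) : Prop :=
  ∃ C : ℝ, 1 ≤ C ∧ ∀ s r : ℝ, 0 < s → s ≤ r → r ≤ 1 → f r / f s ≤ C * (r / s) ^ b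

/-- The lower Matuszewska index of `f` at zero equals `β`,
i.e. `β` is the supremum of the indices for which the lower scaling condition holds. -/
def LowerIndexIs (f : ℝ → ℝ) (β : ℝ) : Prop :=
  (∀ b : ℝ, b < β → HasLowerScaling f b) ∧ (∀ b : ℝ, β < b → ¬ HasLowerScaling f b)

/-- The upper Matuszewska index of `f` at zero equals `β`,
i.e. `β` is the infimum of the indices for which the upper scaling condition holds. -/
def UpperIndexIs (f : ℝ → ℝ) (β : ℝ) : Prop :=
  (∀ b : ℝ, β < b → HasUpperScaling f b) ∧ (∀ b : ℝ, b < β → ¬ HasUpperScaling f b)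

/-- `f` is almost increasing on `(0,1]`. -/
def AlmostIncreasingOn01 (f : ℝ → ℝ) : Prop :=
  ∃ C : ℝ, 1 ≤ C ∧ ∀ s r : ℝ, 0 < s → s ≤ r → r ≤ 1 → f s ≤ C * f r

/-- `f` is almost decreasing on `(0,1]`. -/
def AlmostDecreasingOn01 (f : ℝ → ℝ) : Prop :=
  ∃ C : ℝ, 1 ≤ C ∧ ∀ s r : ℝ, 0 < s → s ≤ r → r ≤ 1 → f r ≤ C * f s

/-- A positive Borel function on `(0,∞)`, equal to `1` on `[1,∞)`. -/
def StdFun (f : ℝ → ℝ) : Prop :=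
  Measurable f ∧ (∀ r : ℝ, 0 < r → 0 < f r) ∧ (∀ r : ℝ, 1 ≤ r → f r = 1)

/-- The scaling condition for the slowly varying factor `ℓ`, with parameters `β₁, β₂`. -/
def EllScaling (l : ℝ → ℝ) (β₁ β₂ : ℝ) : Prop :=
  ∀ ε : ℝ, 0 < ε → ∃ C : ℝ, 1 ≤ C ∧ ∀ s r : ℝ, 0 < s → s ≤ r → r ≤ 1 →
    C⁻¹ * (r / s) ^ (-(min ε β₁)) ≤ l r / l s ∧ l r / l s ≤ C * (r / s) ^ (min ε β₂)

/-- `l` has both Matuszewska indices at zero equal to `0`. -/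
def SlowlyVaryingScaling (l : ℝ → ℝ) : Prop :=
  ∀ ε : ℝ, 0 < ε → ∃ C : ℝ, 1 ≤ C ∧ ∀ s r : ℝ, 0 < s → s ≤ r → r ≤ 1 →
    C⁻¹ * (r / s) ^ (-ε) ≤ l r / l s ∧ l r / l s ≤ C * (r / s) ^ ε

/-- The distance to the boundary of `D`. -/
def dd {d : ℕ} (D : Set (EuclideanSpace ℝ (Fin d))) (x : EuclideanSpace ℝ (Fin d)) : ℝ :=
  Metric.infDist x (frontier D)

/-- The function `A_{f,g,h}(t,x,y)`. -/
def Afun {d : ℕ} (α : ℝ) (D : Set (EuclideanSpace ℝ (Fin d))) (f g h : ℝ → ℝ)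
    (t : ℝ) (x y : EuclideanSpace ℝ (Fin d)) : ℝ :=
  f (max (min (dd D x) (dd D y)) (t ^ (1 / α)) / dist x y) *
  g (max (max (dd D x) (dd D y)) (t ^ (1 / α)) / dist x y) *
  h (max (min (dd D x) (dd D y)) (t ^ (1 / α)) /
      min (max (max (dd D x) (dd D y)) (t ^ (1 / α))) (dist x y))

/-- The inward unit vector `𝐧ₓ = (x - Qₓ)/δ_D(x)`. -/
def nv {d : ℕ} (D : Set (EuclideanSpace ℝ (Fin d)))
    (Q : EuclideanSpace ℝ (Fin d) → EuclideanSpace ℝ (Fin d))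
    (x : EuclideanSpace ℝ (Fin d)) : EuclideanSpace ℝ (Fin d) :=
  (dd D x)⁻¹ • (x - Q x)

/-- `∫_a^b A_{f,g,h}(t,x,x+u𝐧ₓ) A_{f,g,h}(t,x+u𝐧ₓ,y) u^{-α-1} du`. -/
def Iint {d : ℕ} (α : ℝ) (D : Set (EuclideanSpace ℝ (Fin d)))
    (Q : EuclideanSpace ℝ (Fin d) → EuclideanSpace ℝ (Fin d))
    (f g h : ℝ → ℝ) (a b t : ℝ) (x y : EuclideanSpace ℝ (Fin d)) : ℝ :=
  ∫ u in Set.Ioo a b,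
    Afun α D f g h t x (x + u • nv D Q x) * Afun α D f g h t (x + u • nv D Q x) y *
      u ^ (-α - 1)

/-- `∫_a^b f₀(k₂/u) f₂(u/rr) l(k₁/u) u^{-α-1} du`. -/
def Jint (α : ℝ) (f₀ f₂ l : ℝ → ℝ) (a b rr k₁ k₂ : ℝ) : ℝ :=
  ∫ u in Set.Ioo a b, f₀ (k₂ / u) * f₂ (u / rr) * l (k₁ / u) * u ^ (-α - 1)

namespace Helpers




variable {f : ℝ → ℝ} {C e M : ℝ}

lemma ratio_flip {A B C fu fv : ℝ} (hC : 0 < C) (hA : 0 < A) (hAB : B * A = 1)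
    (h2 : C⁻¹ * B * fu ≤ fv) : fu ≤ C * (A * fv) := by
  have hcc : C * C⁻¹ = 1 := mul_inv_cancel₀ hC.ne'
  calc fu = (C * C⁻¹) * (B * A) * fu := by rw [hcc, hAB]; ring
    _ = C * A * (C⁻¹ * B * fu) := by ring
    _ ≤ C * A * fv := mul_le_mul_of_nonneg_left h2 (by positivity)
    _ = C * (A * fv) := by ring

/-- Global version of the upper scaling bound: `f v ≤ C (v/u)^e f u` for all `0 < u ≤ v`. -/
lemma global_upper (hpos : ∀ r : ℝ, 0 < r → 0 < f r) (hone : ∀ r : ℝ, 1 ≤ r → f r = 1) (he : 0 ≤ e) (hC : 1 ≤ C)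
    (H : ∀ s r : ℝ, 0 < s → s ≤ r → r ≤ 1 → f r / f s ≤ C * (r / s) ^ e) :
    ∀ u v : ℝ, 0 < u → u ≤ v → f v ≤ C * (v / u) ^ e * f u := by
  intro u v hu huv
  have hfu := hpos u hu
  by_cases h1 : v ≤ 1
  · exact (div_le_iff₀ hfu).mp (H u v hu huv h1)
  · push_neg at h1
    rw [hone v h1.le]
    by_cases h2 : u ≤ 1
    · have h := H u 1 hu h2 le_rfl
      rw [hone 1 le_rfl] at h
      have h' : 1 ≤ C * (1 / u) ^ e * f u := (div_le_iff₀ hfu).mp h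
      have h3 : (1 / u) ^ e ≤ (v / u) ^ e :=
        Real.rpow_le_rpow (by positivity) (by gcongr) he
      have h4 : C * (1 / u) ^ e * f u ≤ C * (v / u) ^ e * f u := by gcongr
      linarith
    · push_neg at h2
      rw [hone u h2.le]
      have h3 : (1:ℝ) ≤ (v / u) ^ e :=
        Real.one_le_rpow (by rw [le_div_iff₀ hu]; linarith) he
      nlinarith

/-- Global version of the lower scaling bound as an upper bound on `f u`, with cap `M`. -/
lemma global_lower_pos (hpos : ∀ r : ℝ, 0 < r → 0 < f r) (hone : ∀ r : ℝ, 1 ≤ r → f r = 1) (he : 0 ≤ e) (hC : 1 ≤ C) (hM : 1 ≤ M)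
    (H : ∀ s r : ℝ, 0 < s → s ≤ r → r ≤ 1 → C⁻¹ * (r / s) ^ e ≤ f r / f s) :
    ∀ u v : ℝ, 0 < u → u ≤ v → v ≤ M → f u ≤ C * M ^ e * ((u / v) ^ e * f v) := by
  intro u v hu huv hvM
  have hv : 0 < v := hu.trans_le huv
  have hfu := hpos u hu
  have hfv := hpos v hv
  have hC0 : 0 < C := lt_of_lt_of_le one_pos hC
  have hM0 : 0 < M := lt_of_lt_of_le one_pos hM
  have hMe : 1 ≤ M ^ e := Real.one_le_rpow hM he
  by_cases h1 : v ≤ 1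
  · have h2 : C⁻¹ * (v / u) ^ e * f u ≤ f v := (le_div_iff₀ hfu).mp (H u v hu huv h1)
    have hAB : (v / u) ^ e * (u / v) ^ e = 1 := by
      rw [← Real.mul_rpow (by positivity) (by positivity),
        show v / u * (u / v) = 1 by field_simp, Real.one_rpow]
    have h3 := ratio_flip hC0 (Real.rpow_pos_of_pos (by positivity) e) hAB h2
    have hX : 0 < (u / v) ^ e * f v := by
      have := Real.rpow_pos_of_pos (show (0:ℝ) < u / v by positivity) e
      positivity
    nlinarith [mul_nonneg (mul_pos hC0 hX).le (sub_nonneg.mpr hMe)]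
  · push_neg at h1
    rw [hone v h1.le]
    by_cases h2 : u ≤ 1
    · have h := H u 1 hu h2 le_rfl
      rw [hone 1 le_rfl] at h
      have h2' : C⁻¹ * (1 / u) ^ e * f u ≤ 1 := (le_div_iff₀ hfu).mp h
      have hAB : (1 / u) ^ e * u ^ e = 1 := by
        rw [← Real.mul_rpow (by positivity) hu.le,
          show 1 / u * u = 1 by field_simp, Real.one_rpow]
      have h3 : f u ≤ C * (u ^ e * 1) :=
        ratio_flip hC0 (Real.rpow_pos_of_pos hu e) hAB h2'
      have hsplit : u ^ e = (u / v) ^ e * v ^ e := by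
        rw [← Real.mul_rpow (by positivity) hv.le, div_mul_cancel₀ _ hv.ne']
      have hve : v ^ e ≤ M ^ e := Real.rpow_le_rpow hv.le hvM he
      calc f u ≤ C * (u ^ e * 1) := h3
        _ = C * (u / v) ^ e * v ^ e := by rw [hsplit]; ring
        _ ≤ C * (u / v) ^ e * M ^ e := by gcongr
        _ = C * M ^ e * ((u / v) ^ e * 1) := by ring
    · push_neg at h2
      rw [hone u h2.le]
      have h5 : (1 / M : ℝ) ^ e ≤ (u / v) ^ e := by
        apply Real.rpow_le_rpow (by positivity) _ he
        rw [div_le_div_iff₀ hM0 hv]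
        nlinarith
      have h6 : (1 / M : ℝ) ^ e * M ^ e = 1 := by
        rw [← Real.mul_rpow (by positivity) hM0.le,
          show 1 / M * M = 1 by field_simp, Real.one_rpow]
      have hMe0 : 0 < M ^ e := Real.rpow_pos_of_pos hM0 e
      nlinarith [mul_le_mul_of_nonneg_left h5 hMe0.le]

/-- Global version of the slowly-varying lower bound: `f u ≤ C (v/u)^e f v` for `0 < u ≤ v`. -/
lemma global_lower_neg (hpos : ∀ r : ℝ, 0 < r → 0 < f r) (hone : ∀ r : ℝ, 1 ≤ r → f r = 1) (he : 0 ≤ e) (hC : 1 ≤ C)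
    (H : ∀ s r : ℝ, 0 < s → s ≤ r → r ≤ 1 → C⁻¹ * (r / s) ^ (-e) ≤ f r / f s) :
    ∀ u v : ℝ, 0 < u → u ≤ v → f u ≤ C * ((v / u) ^ e * f v) := by
  intro u v hu huv
  have hv : 0 < v := hu.trans_le huv
  have hfu := hpos u hu
  have hfv := hpos v hv
  have hC0 : 0 < C := lt_of_lt_of_le one_pos hC
  by_cases h1 : v ≤ 1
  · have h2 : C⁻¹ * (v / u) ^ (-e) * f u ≤ f v := (le_div_iff₀ hfu).mp (H u v hu huv h1)
    have hAB : (v / u) ^ (-e) * (v / u) ^ e = 1 := by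
      rw [← Real.rpow_add (by positivity), neg_add_cancel, Real.rpow_zero]
    exact ratio_flip hC0 (Real.rpow_pos_of_pos (by positivity) e) hAB h2
  · push_neg at h1
    rw [hone v h1.le]
    by_cases h2 : u ≤ 1
    · have h := H u 1 hu h2 le_rfl
      rw [hone 1 le_rfl] at h
      have h2' : C⁻¹ * (1 / u) ^ (-e) * f u ≤ 1 := (le_div_iff₀ hfu).mp h
      have hAB : (1 / u) ^ (-e) * (1 / u) ^ e = 1 := by
        rw [← Real.rpow_add (by positivity), neg_add_cancel, Real.rpow_zero]
      have h3 : f u ≤ C * ((1 / u) ^ e * 1) :=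
        ratio_flip hC0 (Real.rpow_pos_of_pos (by positivity) e) hAB h2'
      have h4 : (1 / u) ^ e ≤ (v / u) ^ e :=
        Real.rpow_le_rpow (by positivity) (by gcongr) he
      nlinarith
    · push_neg at h2
      rw [hone u h2.le]
      have h3 : (1:ℝ) ≤ (v / u) ^ e :=
        Real.one_le_rpow (by rw [le_div_iff₀ hu]; linarith) he
      nlinarith

/-- Global version of almost increasing. -/
lemma global_inc (hpos : ∀ r : ℝ, 0 < r → 0 < f r) (hone : ∀ r : ℝ, 1 ≤ r → f r = 1) (hC : 1 ≤ C)
    (H : ∀ s r : ℝ, 0 < s → s ≤ r → r ≤ 1 → f s ≤ C * f r) :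
    ∀ u v : ℝ, 0 < u → u ≤ v → f u ≤ C * f v := by
  intro u v hu huv
  by_cases h1 : v ≤ 1
  · exact H u v hu huv h1
  · push_neg at h1
    rw [hone v h1.le]
    by_cases h2 : u ≤ 1
    · have h := H u 1 hu h2 le_rfl
      rw [hone 1 le_rfl] at h
      linarith
    · push_neg at h2
      rw [hone u h2.le]
      linarith

/-- Bound on `Φ`: `Φ s ≤ C (min s 1)^q`. -/
lemma phi_bound (hpos : ∀ r : ℝ, 0 < r → 0 < f r) (hone : ∀ r : ℝ, 1 ≤ r → f r = 1) {q : ℝ} (hC : 1 ≤ C)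
    (H : ∀ s r : ℝ, 0 < s → s ≤ r → r ≤ 1 → C⁻¹ * (r / s) ^ q ≤ f r / f s) :
    ∀ s : ℝ, 0 < s → f s ≤ C * (min s 1) ^ q := by
  intro s hs
  have hC0 : 0 < C := lt_of_lt_of_le one_pos hC
  by_cases h1 : 1 ≤ s
  · rw [hone s h1, min_eq_right h1, Real.one_rpow]; linarith
  · push_neg at h1
    rw [min_eq_left h1.le]
    have hfs := hpos s hs
    have h := H s 1 hs h1.le le_rfl
    rw [hone 1 le_rfl] at h
    have h2' : C⁻¹ * (1 / s) ^ q * f s ≤ 1 := (le_div_iff₀ hfs).mp h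
    have hAB : (1 / s) ^ q * s ^ q = 1 := by
      rw [← Real.mul_rpow (by positivity) hs.le,
        show 1 / s * s = 1 by field_simp, Real.one_rpow]
    have := ratio_flip hC0 (Real.rpow_pos_of_pos hs q) hAB h2'
    linarith [this]





/-- Pointwise bound of the kernel profile by an integrable profile at scale `T = t^{1/α}`. -/
lemma kernel_bound (d : ℕ) {α η P q δ ρ t T : ℝ}
    (ht : 0 < t) (hα : 0 < α) (hT : T = t ^ (1/α)) (hTδ : T ≤ δ) (hρ : 0 < ρ)
    (hη : 0 < η) (hηα : η ≤ α) (hP : 0 ≤ P) (hPq : P - q ≤ α - η) :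
    min (t ^ (-(d:ℝ)/α)) (t * ρ ^ (-(d:ℝ) - α)) * ((1+ρ/δ) ^ P * (min (δ/ρ) 1) ^ q)
      ≤ (2 ^ P * 2 ^ ((d:ℝ)+η)) * (t ^ (-(d:ℝ)/α) * (1+ρ/T) ^ (-((d:ℝ)+η))) := by
  have hT0 : 0 < T := hT ▸ Real.rpow_pos_of_pos ht _
  have hδ0 : 0 < δ := lt_of_lt_of_le hT0 hTδ
  have hdη : (0:ℝ) ≤ (d:ℝ) + η := by positivity
  have htT : T ^ α = t := by
    rw [hT, ← Real.rpow_mul ht.le, one_div, inv_mul_cancel₀ hα.ne', Real.rpow_one]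
  have htd : t ^ (-(d:ℝ)/α) = T ^ (-(d:ℝ)) := by
    rw [hT, ← Real.rpow_mul ht.le]
    congr 1
    field_simp
  have h2P : (0:ℝ) < 2 ^ P := Real.rpow_pos_of_pos two_pos _
  have h2d : (0:ℝ) < 2 ^ ((d:ℝ)+η) := Real.rpow_pos_of_pos two_pos _
  have h2inv : (2:ℝ) ^ ((d:ℝ)+η) * 2 ^ (-((d:ℝ)+η)) = 1 := by
    rw [← Real.rpow_add two_pos, add_neg_cancel, Real.rpow_zero]
  have hm0 : (0:ℝ) < t ^ (-(d:ℝ)/α) := Real.rpow_pos_of_pos ht _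
  -- general tail comparison, used whenever T < ρ
  have tail : ∀ ρ' : ℝ, T < ρ' →
      (2 * (ρ'/T)) ^ (-((d:ℝ)+η)) ≤ (1+ρ'/T) ^ (-((d:ℝ)+η)) ∧
      (2 * (ρ'/T)) ^ (-((d:ℝ)+η)) = 2 ^ (-((d:ℝ)+η)) * (ρ'/T) ^ (-((d:ℝ)+η)) := by
    intro ρ' hρ'
    have hρ0 : 0 < ρ' := hT0.trans hρ'
    have hmono : (1+ρ'/T) ≤ 2 * (ρ'/T) := by
      have : (1:ℝ) ≤ ρ'/T := (one_le_div hT0).mpr hρ'.le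
      linarith
    exact ⟨Real.rpow_le_rpow_of_nonpos (by positivity) hmono (neg_nonpos.mpr hdη),
      Real.mul_rpow (by norm_num) (by positivity)⟩
  by_cases hρδ : ρ ≤ δ
  · -- min (δ/ρ) 1 = 1
    have hmin : min (δ/ρ) 1 = 1 := min_eq_right ((one_le_div hρ).mpr hρδ)
    have hfac : (1+ρ/δ) ^ P ≤ 2 ^ P :=
      Real.rpow_le_rpow (by positivity) (by nlinarith [(div_le_one hδ0).mpr hρδ]) hP
    rw [hmin, Real.one_rpow, mul_one]
    by_cases hρT : ρ ≤ T
    · have hmle : min (t ^ (-(d:ℝ)/α)) (t * ρ ^ (-(d:ℝ) - α)) ≤ t ^ (-(d:ℝ)/α) :=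
        min_le_left _ _
      have h1 : (2:ℝ) ^ (-((d:ℝ)+η)) ≤ (1+ρ/T) ^ (-((d:ℝ)+η)) := by
        apply Real.rpow_le_rpow_of_nonpos (by positivity)
          (by nlinarith [(div_le_one hT0).mpr hρT]) (neg_nonpos.mpr hdη)
      calc min (t ^ (-(d:ℝ)/α)) (t * ρ ^ (-(d:ℝ) - α)) * (1+ρ/δ) ^ P
          ≤ t ^ (-(d:ℝ)/α) * 2 ^ P :=
            mul_le_mul hmle hfac (by positivity) hm0.le
        _ = (2 ^ P * 2 ^ ((d:ℝ)+η)) * (t ^ (-(d:ℝ)/α) * 2 ^ (-((d:ℝ)+η))) := by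
            rw [show (2:ℝ) ^ P * 2 ^ ((d:ℝ)+η) * (t ^ (-(d:ℝ)/α) * 2 ^ (-((d:ℝ)+η)))
              = (2 ^ ((d:ℝ)+η) * 2 ^ (-((d:ℝ)+η))) * (2 ^ P * t ^ (-(d:ℝ)/α)) by ring,
              h2inv]; ring
        _ ≤ (2 ^ P * 2 ^ ((d:ℝ)+η)) * (t ^ (-(d:ℝ)/α) * (1+ρ/T) ^ (-((d:ℝ)+η))) := by
            gcongr
    · -- T < ρ ≤ δ
      push_neg at hρT
      obtain ⟨h1, h2⟩ := tail ρ hρT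
      have hmle : min (t ^ (-(d:ℝ)/α)) (t * ρ ^ (-(d:ℝ) - α)) ≤ t * ρ ^ (-(d:ℝ) - α) :=
        min_le_right _ _
      have e1 : (ρ/T) ^ (-((d:ℝ)+η)) = ρ ^ (-((d:ℝ)+η)) * T ^ ((d:ℝ)+η) := by
        rw [Real.div_rpow hρ.le hT0.le, div_eq_mul_inv, ← Real.rpow_neg hT0.le, neg_neg]
      have key : t * ρ ^ (-(d:ℝ) - α) ≤ t ^ (-(d:ℝ)/α) * (ρ/T) ^ (-((d:ℝ)+η)) := by
        rw [e1, htd, ← htT]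
        have eL : T ^ η * ρ ^ (-((d:ℝ)+η)) * (T ^ (α-η) * ρ ^ (η - α))
            = T ^ α * ρ ^ (-(d:ℝ) - α) := by
          rw [show T ^ η * ρ ^ (-((d:ℝ)+η)) * (T ^ (α-η) * ρ ^ (η-α))
            = (T ^ η * T ^ (α-η)) * (ρ ^ (-((d:ℝ)+η)) * ρ ^ (η-α)) by ring,
            ← Real.rpow_add hT0, ← Real.rpow_add hρ,
            show η + (α-η) = α by ring, show -((d:ℝ)+η) + (η-α) = -(d:ℝ) - α by ring]
        have eR : T ^ (-(d:ℝ)) * (ρ ^ (-((d:ℝ)+η)) * T ^ ((d:ℝ)+η))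
            = T ^ η * ρ ^ (-((d:ℝ)+η)) := by
          rw [show T ^ (-(d:ℝ)) * (ρ ^ (-((d:ℝ)+η)) * T ^ ((d:ℝ)+η))
            = (T ^ (-(d:ℝ)) * T ^ ((d:ℝ)+η)) * ρ ^ (-((d:ℝ)+η)) by ring,
            ← Real.rpow_add hT0, show -(d:ℝ) + ((d:ℝ)+η) = η by ring]
        rw [← eL, eR]
        have hfrac : T ^ (α-η) * ρ ^ (η - α) ≤ 1 := by
          have h3 : T ^ (α-η) ≤ ρ ^ (α-η) :=
            Real.rpow_le_rpow hT0.le hρT.le (by linarith)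
          have h4 : ρ ^ (η-α) = (ρ ^ (α-η))⁻¹ := by
            rw [← Real.rpow_neg hρ.le]; congr 1; ring
          rw [h4, ← div_eq_mul_inv, div_le_one (Real.rpow_pos_of_pos hρ _)]
          exact h3
        nlinarith [mul_pos (Real.rpow_pos_of_pos hT0 η) (Real.rpow_pos_of_pos hρ (-((d:ℝ)+η)))]
      calc min (t ^ (-(d:ℝ)/α)) (t * ρ ^ (-(d:ℝ) - α)) * (1+ρ/δ) ^ P
          ≤ (t * ρ ^ (-(d:ℝ) - α)) * 2 ^ P :=
            mul_le_mul hmle hfac (by positivity) (by positivity)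
        _ ≤ (t ^ (-(d:ℝ)/α) * (ρ/T) ^ (-((d:ℝ)+η))) * 2 ^ P := by gcongr
        _ = (2 ^ P * 2 ^ ((d:ℝ)+η)) * (t ^ (-(d:ℝ)/α) * (2 ^ (-((d:ℝ)+η)) * (ρ/T) ^ (-((d:ℝ)+η)))) := by
            rw [show (2:ℝ) ^ P * 2 ^ ((d:ℝ)+η) * (t ^ (-(d:ℝ)/α) * (2 ^ (-((d:ℝ)+η)) * (ρ/T) ^ (-((d:ℝ)+η))))
              = (2 ^ ((d:ℝ)+η) * 2 ^ (-((d:ℝ)+η))) * (2 ^ P * (t ^ (-(d:ℝ)/α) * (ρ/T) ^ (-((d:ℝ)+η)))) by ring,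
              h2inv]; ring
        _ ≤ (2 ^ P * 2 ^ ((d:ℝ)+η)) * (t ^ (-(d:ℝ)/α) * (1+ρ/T) ^ (-((d:ℝ)+η))) := by
            rw [← h2]; gcongr
  · -- δ < ρ
    push_neg at hρδ
    have hρT : T < ρ := lt_of_le_of_lt hTδ hρδ
    obtain ⟨h1, h2⟩ := tail ρ hρT
    have hmin : min (δ/ρ) 1 = δ/ρ := min_eq_left ((div_le_one hρ).mpr hρδ.le)
    rw [hmin]
    have hmle : min (t ^ (-(d:ℝ)/α)) (t * ρ ^ (-(d:ℝ) - α)) ≤ t * ρ ^ (-(d:ℝ) - α) :=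
      min_le_right _ _
    -- (1+ρ/δ)^P ≤ 2^P (ρ/δ)^P
    have hfac : (1+ρ/δ) ^ P ≤ 2 ^ P * (ρ/δ) ^ P := by
      rw [← Real.mul_rpow (by norm_num) (by positivity)]
      apply Real.rpow_le_rpow (by positivity) _ hP
      have : (1:ℝ) ≤ ρ/δ := (one_le_div hδ0).mpr hρδ.le
      linarith
    -- (ρ/δ)^P (δ/ρ)^q = (ρ/δ)^{P-q}
    have hcomb : (ρ/δ) ^ P * (δ/ρ) ^ q = (ρ/δ) ^ (P - q) := by
      have : (δ/ρ) ^ q = (ρ/δ) ^ (-q) := by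
        rw [show δ/ρ = (ρ/δ)⁻¹ by rw [inv_div],
          Real.inv_rpow (by positivity : (0:ℝ) ≤ ρ/δ),
          Real.rpow_neg (by positivity : (0:ℝ) ≤ ρ/δ)]
      rw [this, ← Real.rpow_add (by positivity), sub_eq_add_neg]
    have hρδ1 : (1:ℝ) ≤ ρ/δ := (one_le_div hδ0).mpr hρδ.le
    have hρT1 : (1:ℝ) ≤ ρ/T := (one_le_div hT0).mpr hρT.le
    -- (ρ/δ)^{P-q} ≤ (ρ/T)^{α-η}
    have hstep : (ρ/δ) ^ (P - q) ≤ (ρ/T) ^ (α - η) := by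
      by_cases hPq0 : 0 ≤ P - q
      · calc (ρ/δ) ^ (P - q) ≤ (ρ/T) ^ (P - q) := by
              apply Real.rpow_le_rpow (by positivity) _ hPq0
              gcongr
          _ ≤ (ρ/T) ^ (α - η) := Real.rpow_le_rpow_of_exponent_le hρT1 hPq
      · push_neg at hPq0
        calc (ρ/δ) ^ (P - q) ≤ 1 :=
              Real.rpow_le_one_of_one_le_of_nonpos hρδ1 hPq0.le
          _ ≤ (ρ/T) ^ (α - η) := Real.one_le_rpow hρT1 (by linarith)
    -- key as in case 2 but with the extra factor (ρ/T)^{α-η}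
    have key : (t * ρ ^ (-(d:ℝ) - α)) * (ρ/T) ^ (α-η)
        = t ^ (-(d:ℝ)/α) * (ρ/T) ^ (-((d:ℝ)+η)) := by
      rw [htd, ← htT]
      rw [Real.div_rpow hρ.le hT0.le, Real.div_rpow hρ.le hT0.le]
      rw [div_eq_mul_inv, div_eq_mul_inv, ← Real.rpow_neg hT0.le, ← Real.rpow_neg hT0.le]
      rw [show T ^ α * ρ ^ (-(d:ℝ) - α) * (ρ ^ (α-η) * T ^ (-(α-η)))
        = (T ^ α * T ^ (-(α-η))) * (ρ ^ (-(d:ℝ)-α) * ρ ^ (α-η)) by ring,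
        ← Real.rpow_add hT0, ← Real.rpow_add hρ,
        show T ^ (-(d:ℝ)) * (ρ ^ (-((d:ℝ)+η)) * T ^ (-(-((d:ℝ)+η))))
        = (T ^ (-(d:ℝ)) * T ^ (-(-((d:ℝ)+η)))) * ρ ^ (-((d:ℝ)+η)) by ring,
        ← Real.rpow_add hT0]
      rw [show α + -(α-η) = η by ring, show -(d:ℝ) - α + (α-η) = -((d:ℝ)+η) - η + η by ring,
        show -(d:ℝ) + -(-((d:ℝ)+η)) = η by ring]
      ring_nf
    have hm2 : 0 ≤ t * ρ ^ (-(d:ℝ) - α) := by positivity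
    calc min (t ^ (-(d:ℝ)/α)) (t * ρ ^ (-(d:ℝ) - α)) * ((1+ρ/δ) ^ P * (δ/ρ) ^ q)
        ≤ (t * ρ ^ (-(d:ℝ) - α)) * ((2 ^ P * (ρ/δ) ^ P) * (δ/ρ) ^ q) := by
          exact mul_le_mul hmle (mul_le_mul_of_nonneg_right hfac (by positivity))
            (by positivity) hm2
      _ = 2 ^ P * ((t * ρ ^ (-(d:ℝ) - α)) * (ρ/δ) ^ (P-q)) := by
          rw [show (2:ℝ) ^ P * (ρ/δ) ^ P * (δ/ρ) ^ q = 2 ^ P * ((ρ/δ) ^ P * (δ/ρ) ^ q) by ring, hcomb]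
          ring
      _ ≤ 2 ^ P * ((t * ρ ^ (-(d:ℝ) - α)) * (ρ/T) ^ (α-η)) := by gcongr
      _ = 2 ^ P * (t ^ (-(d:ℝ)/α) * (ρ/T) ^ (-((d:ℝ)+η))) := by rw [key]
      _ = (2 ^ P * 2 ^ ((d:ℝ)+η)) * (t ^ (-(d:ℝ)/α) * (2 ^ (-((d:ℝ)+η)) * (ρ/T) ^ (-((d:ℝ)+η)))) := by
          rw [show (2:ℝ) ^ P * 2 ^ ((d:ℝ)+η) * (t ^ (-(d:ℝ)/α) * (2 ^ (-((d:ℝ)+η)) * (ρ/T) ^ (-((d:ℝ)+η))))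
            = (2 ^ ((d:ℝ)+η) * 2 ^ (-((d:ℝ)+η))) * (2 ^ P * (t ^ (-(d:ℝ)/α) * (ρ/T) ^ (-((d:ℝ)+η)))) by ring,
            h2inv]; ring
      _ ≤ (2 ^ P * 2 ^ ((d:ℝ)+η)) * (t ^ (-(d:ℝ)/α) * (1+ρ/T) ^ (-((d:ℝ)+η))) := by
          rw [← h2]; gcongr


lemma frontier_nonempty {d : ℕ} (hd : 2 ≤ d) (D : Set (EuclideanSpace ℝ (Fin d)))
    (hDbdd : Bornology.IsBounded D) (hne : D.Nonempty) : (frontier D).Nonempty := by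
  haveI : Nonempty (Fin d) := ⟨⟨0, by omega⟩⟩
  haveI : Nontrivial (EuclideanSpace ℝ (Fin d)) := by
    infer_instance
  rw [nonempty_iff_ne_empty]
  intro hfr
  rcases frontier_eq_empty_iff.mp hfr with h | h
  · exact absurd (h ▸ hne) (by simp)
  · exact NormedSpace.unbounded_univ ℝ (EuclideanSpace ℝ (Fin d)) (h ▸ hDbdd)

lemma dd_pos {d : ℕ} (hd : 2 ≤ d) {D : Set (EuclideanSpace ℝ (Fin d))} (hDopen : IsOpen D)
    (hDbdd : Bornology.IsBounded D) {z : EuclideanSpace ℝ (Fin d)} (hz : z ∈ D) :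
    0 < Metric.infDist z (frontier D) := by
  have hfr := frontier_nonempty hd D hDbdd ⟨z, hz⟩
  refine (IsClosed.notMem_iff_infDist_pos isClosed_frontier hfr).mp ?_
  rw [hDopen.frontier_eq]
  exact fun h => h.2 hz


end Helpers

set_option maxHeartbeats 2000000 in
/-- Lemma 8.5(i). -/
theorem statement_16
    (d : ℕ) (hd : 2 ≤ d)
    (D : Set (EuclideanSpace ℝ (Fin d))) (hDopen : IsOpen D)
    (hDbdd : Bornology.IsBounded D)
    (hHaus : ∀ ε : ℝ, 0 < ε → ε < 1 → ∃ c : ℝ, 0 < c ∧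
      ∀ x ∈ D, ∀ ρ : ℝ, 0 < ρ →
        (∫ z in D ∩ Metric.ball x ρ, dd D z ^ (-ε))
          ≤ c * max (dd D x) ρ ^ (-ε) * ρ ^ (d : ℝ))
    (α β βs γ γs : ℝ) (hα0 : 0 < α) (hα2 : α < 2)
    (hβ : 0 ≤ β) (hβs : β ≤ βs) (hγ : 0 ≤ γ) (hγs : γ ≤ γs)
    (Φ Ψ l : ℝ → ℝ)
    (hΦ : StdFun Φ) (hΦinc : AlmostIncreasingOn01 Φ)
    (hΦlow : LowerIndexIs Φ β) (hΦup : UpperIndexIs Φ βs)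
    (hΨ : StdFun Ψ) (hΨinc : AlmostIncreasingOn01 Ψ)
    (hΨlow : LowerIndexIs Ψ γ) (hΨup : UpperIndexIs Ψ γs)
    (hl : StdFun l) (hlscale : SlowlyVaryingScaling l)
    (hgap : γs < α + β) (hlinc : γ = 0 → AlmostIncreasingOn01 l) :
    ∃ C : ℝ, 0 < C ∧
      ∀ r : ℝ, 0 < r → r < Metric.diam D → ∀ x ∈ D, dd D x < 5 * r →
        ∀ t : ℝ, 0 < t → t ≤ r ^ α → ∀ k : ℝ, 0 < k →
          (∫ z in D ∩ Metric.ball x r,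
              min (t ^ (-(d : ℝ) / α)) (t * dist x z ^ (-(d : ℝ) - α)) *
                Φ (max (dd D x) (t ^ (1 / α)) / dist x z) * Ψ (dd D z / r) *
                l (dd D z / k))
            ≤ C * (Ψ (max (dd D x) (t ^ (1 / α)) / r) *
                l (max (dd D x) (t ^ (1 / α)) / k)) := by
  classical
  have hΨpos := hΨ.2.1
  have hΨone := hΨ.2.2
  have hlpos := hl.2.1
  have hlone := hl.2.2
  have hΦpos := hΦ.2.1
  have hΦone := hΦ.2.2
  have hγγs : (0:ℝ) ≤ γs := le_trans hγ hγs
  -- choice of exponents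
  set η := min ((α + β - γs)/4) (α/2) with hηdef
  have hη : 0 < η := lt_min (by linarith) (by linarith)
  have hηα : η ≤ α := le_trans (min_le_right _ _) (by linarith)
  have hη4 : γs - β ≤ α - 4*η := by
    have := min_le_left ((α + β - γs)/4) (α/2)
    linarith
  set p := γs + η with hpdef
  have hp : 0 < p := by positivity
  set q := β - η with hqdef
  set ε₀ := if 0 < γ then min η (γ/4) else η with hε₀def
  have hε₀pos : 0 < ε₀ := by
    rw [hε₀def]; split_ifs with h
    · exact lt_min hη (by linarith)
    · exact hη
  have hε₀η : ε₀ ≤ η := by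
    rw [hε₀def]; split_ifs
    · exact min_le_left _ _
    · exact le_rfl
  set P := p + ε₀ with hPdef
  have hP0 : 0 ≤ P := by positivity
  have hPq : P - q ≤ α - η := by
    rw [hPdef, hpdef, hqdef]; linarith
  -- scaling constants
  obtain ⟨C1, hC1, H1⟩ := hΨup.1 p (by rw [hpdef]; linarith)
  have hC10 : 0 < C1 := lt_of_lt_of_le one_pos hC1
  have GL1 := Helpers.global_upper hΨpos hΨone hp.le hC1 H1
  obtain ⟨C6, hC6, H6⟩ := hΦlow.1 q (by rw [hqdef]; linarith)
  have hC60 : 0 < C6 := lt_of_lt_of_le one_pos hC6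
  have GL4 := Helpers.phi_bound hΦpos hΦone hC6 H6
  obtain ⟨C4, hC4, H4⟩ := hlscale ε₀ hε₀pos
  have hC40 : 0 < C4 := lt_of_lt_of_le one_pos hC4
  have GL3a := Helpers.global_upper hlpos hlone hε₀pos.le hC4
    (fun s r h1 h2 h3 => (H4 s r h1 h2 h3).2)
  have GL3b := Helpers.global_lower_neg hlpos hlone hε₀pos.le hC4
    (fun s r h1 h2 h3 => (H4 s r h1 h2 h3).1)
  -- the combined Ψ·ℓ comparison
  obtain ⟨K, hK1, HPSL⟩ : ∃ K : ℝ, 1 ≤ K ∧ ∀ R δ a kk s : ℝ, 0 < R → 0 < δ → δ ≤ 5*R →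
      0 < a → 0 ≤ s → a ≤ δ*(1+s) → 0 < kk →
      Ψ (a/R) * l (a/kk) ≤ K * ((1+s) ^ P * (Ψ (δ/R) * l (δ/kk))) := by
    have Hbig : ∀ R δ a kk s : ℝ, 0 < R → 0 < δ → 0 < a → 0 ≤ s → δ ≤ a → a ≤ δ*(1+s) →
        0 < kk → Ψ (a/R) * l (a/kk) ≤ (C1*C4) * ((1+s) ^ P * (Ψ (δ/R) * l (δ/kk))) := by
      intro R δ a kk s hR hδ ha hs hδa haδ hkk
      have hΨδ : 0 < Ψ (δ/R) := hΨpos _ (by positivity)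
      have hlδ : 0 < l (δ/kk) := hlpos _ (by positivity)
      have hla : 0 < l (a/kk) := hlpos _ (by positivity)
      have h1 : Ψ (a/R) ≤ C1 * ((a/R)/(δ/R)) ^ p * Ψ (δ/R) :=
        GL1 (δ/R) (a/R) (by positivity) (by gcongr)
      have h2 : l (a/kk) ≤ C4 * ((a/kk)/(δ/kk)) ^ ε₀ * l (δ/kk) :=
        GL3a (δ/kk) (a/kk) (by positivity) (by gcongr)
      have hr1 : (a/R)/(δ/R) = a/δ := by
        rw [div_div_div_cancel_right₀]; exact hR.ne'
      have hr2 : (a/kk)/(δ/kk) = a/δ := by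
        rw [div_div_div_cancel_right₀]; exact hkk.ne'
      rw [hr1] at h1; rw [hr2] at h2
      have haδ1 : a/δ ≤ 1+s := by rw [div_le_iff₀ hδ]; linarith
      have hb1 : (a/δ) ^ p ≤ (1+s) ^ p := Real.rpow_le_rpow (by positivity) haδ1 hp.le
      have hb2 : (a/δ) ^ ε₀ ≤ (1+s) ^ ε₀ := Real.rpow_le_rpow (by positivity) haδ1 hε₀pos.le
      have hsplit : (1+s) ^ p * (1+s) ^ ε₀ = (1+s) ^ P := by
        rw [← Real.rpow_add (by linarith)]
      have h1' : Ψ (a/R) ≤ C1 * (1+s) ^ p * Ψ (δ/R) :=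
        h1.trans (mul_le_mul_of_nonneg_right (mul_le_mul_of_nonneg_left hb1 hC10.le) hΨδ.le)
      have h2' : l (a/kk) ≤ C4 * (1+s) ^ ε₀ * l (δ/kk) :=
        h2.trans (mul_le_mul_of_nonneg_right (mul_le_mul_of_nonneg_left hb2 hC40.le) hlδ.le)
      calc Ψ (a/R) * l (a/kk)
          ≤ (C1 * (1+s) ^ p * Ψ (δ/R)) * (C4 * (1+s) ^ ε₀ * l (δ/kk)) :=
            mul_le_mul h1' h2' hla.le
              (by
                have := Real.rpow_nonneg (show (0:ℝ) ≤ 1+s by linarith) p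
                positivity)
        _ = (C1*C4) * (((1+s) ^ p * (1+s) ^ ε₀) * (Ψ (δ/R) * l (δ/kk))) := by ring
        _ = (C1*C4) * ((1+s) ^ P * (Ψ (δ/R) * l (δ/kk))) := by rw [hsplit]
    rcases lt_or_ge 0 γ with hγpos | hγ0
    · -- case γ > 0
      obtain ⟨C2, hC2, H2⟩ := hΨlow.1 (γ/2) (by linarith)
      have hC20 : 0 < C2 := lt_of_lt_of_le one_pos hC2
      have GL2 := Helpers.global_lower_pos hΨpos hΨone (by linarith : (0:ℝ) ≤ γ/2) hC2
        (by norm_num : (1:ℝ) ≤ 5) H2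
      have h5e : (1:ℝ) ≤ (5:ℝ) ^ (γ/2) := Real.one_le_rpow (by norm_num) (by linarith)
      have hC14 : (1:ℝ) ≤ C1*C4 := by
        calc (1:ℝ) = 1*1 := by norm_num
          _ ≤ C1*C4 := mul_le_mul hC1 hC4 zero_le_one (by linarith)
      have hXnn : (0:ℝ) ≤ C2 * (5:ℝ) ^ (γ/2) * C4 :=
        mul_nonneg (mul_nonneg hC20.le (by linarith)) hC40.le
      refine ⟨C1*C4 + C2 * (5:ℝ) ^ (γ/2) * C4, by linarith, ?_⟩
      intro R δ a kk s hR hδ hδ5 ha hs haδ hkk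
      have hΨδ : 0 < Ψ (δ/R) := hΨpos _ (by positivity)
      have hlδ : 0 < l (δ/kk) := hlpos _ (by positivity)
      have hla : 0 < l (a/kk) := hlpos _ (by positivity)
      have base_pos : (0:ℝ) < (1+s) ^ P * (Ψ (δ/R) * l (δ/kk)) := by
        have := Real.rpow_pos_of_pos (show (0:ℝ) < 1+s by linarith) P
        positivity
      by_cases hcase : δ ≤ a
      · have h := Hbig R δ a kk s hR hδ ha hs hcase haδ hkk
        refine h.trans (mul_le_mul_of_nonneg_right ?_ base_pos.le)
        linarith
      · push_neg at hcase
        have h1 : Ψ (a/R) ≤ C2 * (5:ℝ) ^ (γ/2) * (((a/R)/(δ/R)) ^ (γ/2) * Ψ (δ/R)) :=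
          GL2 (a/R) (δ/R) (by positivity) (by gcongr)
            ((div_le_iff₀ hR).mpr (by linarith))
        have h2 : l (a/kk) ≤ C4 * (((δ/kk)/(a/kk)) ^ ε₀ * l (δ/kk)) :=
          GL3b (a/kk) (δ/kk) (by positivity) (by gcongr)
        have hr1 : (a/R)/(δ/R) = a/δ := by rw [div_div_div_cancel_right₀]; exact hR.ne'
        have hr2 : (δ/kk)/(a/kk) = δ/a := by rw [div_div_div_cancel_right₀]; exact hkk.ne'
        rw [hr1] at h1; rw [hr2] at h2
        have hεγ : ε₀ ≤ γ/4 := by rw [hε₀def, if_pos hγpos]; exact min_le_right _ _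
        have key : (a/δ) ^ (γ/2) * (δ/a) ^ ε₀ ≤ 1 := by
          have e : (δ/a) ^ ε₀ = (a/δ) ^ (-ε₀) := by
            rw [show δ/a = (a/δ)⁻¹ by rw [inv_div],
              Real.inv_rpow (by positivity), Real.rpow_neg (by positivity)]
          rw [e, ← Real.rpow_add (by positivity)]
          exact Real.rpow_le_one (by positivity) ((div_le_one hδ).mpr hcase.le) (by linarith)
        have h1s : (1:ℝ) ≤ (1+s) ^ P := Real.one_le_rpow (by linarith) hP0
        calc Ψ (a/R) * l (a/kk)
            ≤ (C2 * (5:ℝ) ^ (γ/2) * ((a/δ) ^ (γ/2) * Ψ (δ/R))) * (C4 * ((δ/a) ^ ε₀ * l (δ/kk))) := by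
              apply mul_le_mul h1 h2 hla.le
              have hx : (0:ℝ) ≤ (a/δ) ^ (γ/2) := Real.rpow_nonneg (by positivity) _
              positivity
          _ = (C2 * (5:ℝ) ^ (γ/2) * C4) * (((a/δ) ^ (γ/2) * (δ/a) ^ ε₀) * (Ψ (δ/R) * l (δ/kk))) := by
              ring
          _ ≤ (C2 * (5:ℝ) ^ (γ/2) * C4) * (1 * (Ψ (δ/R) * l (δ/kk))) := by
              apply mul_le_mul_of_nonneg_left
                (mul_le_mul_of_nonneg_right key (by positivity)) (by positivity)
          _ ≤ (C2 * (5:ℝ) ^ (γ/2) * C4) * ((1+s) ^ P * (Ψ (δ/R) * l (δ/kk))) := by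
              apply mul_le_mul_of_nonneg_left
                (mul_le_mul_of_nonneg_right h1s (by positivity)) (by positivity)
          _ ≤ (C1*C4 + C2 * (5:ℝ) ^ (γ/2) * C4) * ((1+s) ^ P * (Ψ (δ/R) * l (δ/kk))) :=
              mul_le_mul_of_nonneg_right (by linarith) base_pos.le
    · -- case γ = 0
      have hγ00 : γ = 0 := le_antisymm hγ0 hγ
      obtain ⟨C5, hC5, H5⟩ := hlinc hγ00
      have hC50 : 0 < C5 := lt_of_lt_of_le one_pos hC5
      obtain ⟨C3, hC3, H3⟩ := hΨinc
      have hC30 : 0 < C3 := lt_of_lt_of_le one_pos hC3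
      have GL2' := Helpers.global_inc hΨpos hΨone hC3 H3
      have GL3' := Helpers.global_inc hlpos hlone hC5 H5
      have hC14 : (1:ℝ) ≤ C1*C4 := by
        calc (1:ℝ) = 1*1 := by norm_num
          _ ≤ C1*C4 := mul_le_mul hC1 hC4 zero_le_one (by linarith)
      have hXnn : (0:ℝ) ≤ C3*C5 := mul_nonneg hC30.le hC50.le
      refine ⟨C1*C4 + C3*C5, by linarith, ?_⟩
      intro R δ a kk s hR hδ hδ5 ha hs haδ hkk
      have hΨδ : 0 < Ψ (δ/R) := hΨpos _ (by positivity)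
      have hlδ : 0 < l (δ/kk) := hlpos _ (by positivity)
      have hla : 0 < l (a/kk) := hlpos _ (by positivity)
      have base_pos : (0:ℝ) < (1+s) ^ P * (Ψ (δ/R) * l (δ/kk)) := by
        have := Real.rpow_pos_of_pos (show (0:ℝ) < 1+s by linarith) P
        positivity
      by_cases hcase : δ ≤ a
      · have h := Hbig R δ a kk s hR hδ ha hs hcase haδ hkk
        refine h.trans (mul_le_mul_of_nonneg_right ?_ base_pos.le)
        linarith
      · push_neg at hcase
        have h1 : Ψ (a/R) ≤ C3 * Ψ (δ/R) := GL2' (a/R) (δ/R) (by positivity) (by gcongr)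
        have h2 : l (a/kk) ≤ C5 * l (δ/kk) := GL3' (a/kk) (δ/kk) (by positivity) (by gcongr)
        have h1s : (1:ℝ) ≤ (1+s) ^ P := Real.one_le_rpow (by linarith) hP0
        calc Ψ (a/R) * l (a/kk)
            ≤ (C3 * Ψ (δ/R)) * (C5 * l (δ/kk)) :=
              mul_le_mul h1 h2 hla.le (by positivity)
          _ = (C3*C5) * (1 * (Ψ (δ/R) * l (δ/kk))) := by ring
          _ ≤ (C3*C5) * ((1+s) ^ P * (Ψ (δ/R) * l (δ/kk))) := by
              apply mul_le_mul_of_nonneg_left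
                (mul_le_mul_of_nonneg_right h1s (by positivity)) (by positivity)
          _ ≤ (C1*C4 + C3*C5) * ((1+s) ^ P * (Ψ (δ/R) * l (δ/kk))) :=
              mul_le_mul_of_nonneg_right (by linarith) base_pos.le
  -- the integrable radial profile
  set K₂ := (2:ℝ) ^ P * 2 ^ ((d:ℝ)+η) with hK₂def
  have hK₂0 : 0 < K₂ := by
    have := Real.rpow_pos_of_pos (show (0:ℝ) < 2 by norm_num) P
    have := Real.rpow_pos_of_pos (show (0:ℝ) < 2 by norm_num) ((d:ℝ)+η)
    positivity
  set F₀ : EuclideanSpace ℝ (Fin d) → ℝ := fun u => (1 + ‖u‖) ^ (-((d:ℝ)+η)) with hF₀def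
  have hF₀int : Integrable F₀ volume := by
    apply integrable_one_add_norm
    rw [finrank_euclideanSpace_fin]; linarith
  have hF₀nn : ∀ u, 0 ≤ F₀ u := fun u => by
    rw [hF₀def]; positivity
  set κ := ∫ u, F₀ u with hκdef
  have hκ0 : 0 ≤ κ := integral_nonneg hF₀nn
  have hKC : (0:ℝ) ≤ K * C6 * K₂ * κ := by positivity
  refine ⟨K * C6 * K₂ * κ + 1, by linarith, ?_⟩
  intro r hr hrdiam x hxD hdx t ht htr k hk
  set T := t ^ (1/α) with hTdef
  have hT0 : 0 < T := Real.rpow_pos_of_pos ht _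
  set δ := max (dd D x) T with hδdef
  have hδ0 : 0 < δ := lt_of_lt_of_le hT0 (le_max_right _ _)
  have hTδ : T ≤ δ := le_max_right _ _
  have hTr : T ≤ r := by
    rw [hTdef]
    calc t ^ (1/α) ≤ (r ^ α) ^ (1/α) := Real.rpow_le_rpow ht.le htr (by positivity)
      _ = r := by
        rw [← Real.rpow_mul hr.le, mul_one_div, div_self hα0.ne', Real.rpow_one]
  have hδ5r : δ ≤ 5*r := max_le (by linarith) (by linarith)
  have hΨδr : 0 < Ψ (δ/r) := hΨpos _ (div_pos hδ0 hr)
  have hlδk : 0 < l (δ/k) := hlpos _ (div_pos hδ0 hk)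
  set G := Ψ (δ/r) * l (δ/k) with hGdef
  have hG0 : 0 < G := mul_pos hΨδr hlδk
  set S := D ∩ Metric.ball x r with hSdef
  have hSm : MeasurableSet S := hDopen.measurableSet.inter measurableSet_ball
  set c₀ := K * C6 * K₂ * t ^ (-(d:ℝ)/α) * G with hc₀def
  have hc₀0 : 0 ≤ c₀ := by positivity
  set g : EuclideanSpace ℝ (Fin d) → ℝ := fun z => c₀ * F₀ (T⁻¹ • (z - x)) with hgdef
  have hgnn : ∀ z, 0 ≤ g z := fun z => mul_nonneg hc₀0 (hF₀nn _)
  -- integrability of g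
  have hg1 : Integrable (fun z : EuclideanSpace ℝ (Fin d) => F₀ (T⁻¹ • z)) volume :=
    (integrable_comp_smul_iff volume F₀ (inv_ne_zero hT0.ne')).mpr hF₀int
  have hg2 : Integrable (fun z : EuclideanSpace ℝ (Fin d) => F₀ (T⁻¹ • (z - x))) volume := by
    have h2 := hg1.comp_add_right (-x)
    simpa [sub_eq_add_neg] using h2
  have hgint : Integrable g volume := by
    rw [hgdef]; exact hg2.const_mul c₀
  -- pointwise bounds on S
  have hFnn : ∀ z ∈ S, 0 ≤ min (t ^ (-(d:ℝ) / α)) (t * dist x z ^ (-(d:ℝ) - α)) *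
      Φ (δ / dist x z) * Ψ (dd D z / r) * l (dd D z / k) := by
    intro z hz
    by_cases hzx : z = x
    · subst hzx
      have h2d : (2:ℝ) ≤ (d:ℝ) := by exact_mod_cast hd
      have hne : -(d:ℝ) - α ≠ 0 := ne_of_lt (by linarith)
      rw [dist_self, Real.zero_rpow hne, mul_zero,
        min_eq_right (le_of_lt (Real.rpow_pos_of_pos ht (-(d:ℝ)/α)))]
      simp
    · have hρ : 0 < dist x z := dist_pos.mpr (fun h => hzx h.symm)
      have ha : 0 < dd D z := Helpers.dd_pos hd hDopen hDbdd hz.1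
      have h1 : 0 ≤ min (t ^ (-(d:ℝ) / α)) (t * dist x z ^ (-(d:ℝ) - α)) :=
        le_min (Real.rpow_pos_of_pos ht _).le (by positivity)
      have h2 : 0 < Φ (δ / dist x z) := hΦpos _ (div_pos hδ0 hρ)
      have h3 : 0 < Ψ (dd D z / r) := hΨpos _ (div_pos ha hr)
      have h4 : 0 < l (dd D z / k) := hlpos _ (div_pos ha hk)
      exact mul_nonneg (mul_nonneg (mul_nonneg h1 h2.le) h3.le) h4.le
  have hFg : ∀ z ∈ S, min (t ^ (-(d:ℝ) / α)) (t * dist x z ^ (-(d:ℝ) - α)) *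
      Φ (δ / dist x z) * Ψ (dd D z / r) * l (dd D z / k) ≤ g z := by
    intro z hz
    by_cases hzx : z = x
    · subst hzx
      have h2d : (2:ℝ) ≤ (d:ℝ) := by exact_mod_cast hd
      have hne : -(d:ℝ) - α ≠ 0 := ne_of_lt (by linarith)
      rw [dist_self, Real.zero_rpow hne, mul_zero,
        min_eq_right (le_of_lt (Real.rpow_pos_of_pos ht (-(d:ℝ)/α)))]
      simp only [zero_mul]
      exact hgnn _
    · have hρ : 0 < dist x z := dist_pos.mpr (fun h => hzx h.symm)
      have ha : 0 < dd D z := Helpers.dd_pos hd hDopen hDbdd hz.1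
      have hxδ : dd D x ≤ δ := le_of_le_of_eq (le_max_left _ _) hδdef.symm
      have haδρ : dd D z ≤ δ * (1 + dist x z / δ) := by
        have h1 : dd D z ≤ dd D x + dist z x := Metric.infDist_le_infDist_add_dist
        have h2 : δ * (1 + dist x z/δ) = δ + dist x z := by field_simp
        rw [h2]
        calc dd D z ≤ dd D x + dist z x := h1
          _ = dd D x + dist x z := by rw [dist_comm]
          _ ≤ δ + dist x z := by linarith
      have hψl := HPSL r δ (dd D z) k (dist x z/δ) hr hδ0 hδ5r ha
        (div_nonneg hρ.le hδ0.le) haδρ hk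
      have hφ := GL4 (δ/dist x z) (div_pos hδ0 hρ)
      have hker := Helpers.kernel_bound d ht hα0 hTdef hTδ hρ hη hηα hP0 hPq
      have hnorm : ‖T⁻¹ • (z - x)‖ = dist x z / T := by
        rw [norm_smul, Real.norm_eq_abs, abs_of_pos (inv_pos.mpr hT0),
          show ‖z - x‖ = dist x z from (dist_eq_norm' x z).symm, inv_mul_eq_div]
      have hm0 : 0 ≤ min (t ^ (-(d:ℝ)/α)) (t * dist x z ^ (-(d:ℝ) - α)) :=
        le_min (Real.rpow_pos_of_pos ht _).le (by positivity)
      have hψl0 : 0 ≤ Ψ (dd D z / r) * l (dd D z / k) :=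
        mul_nonneg (hΨpos _ (div_pos ha hr)).le (hlpos _ (div_pos ha hk)).le
      have hφb0 : 0 ≤ C6 * (min (δ/dist x z) 1) ^ q :=
        mul_nonneg hC60.le (Real.rpow_nonneg
          (le_min (div_nonneg hδ0.le hρ.le) zero_le_one) _)
      have hKC6 : (0:ℝ) ≤ K * C6 := mul_nonneg (by linarith) hC60.le
      calc min (t ^ (-(d:ℝ) / α)) (t * dist x z ^ (-(d:ℝ) - α)) *
            Φ (δ / dist x z) * Ψ (dd D z / r) * l (dd D z / k)
          = min (t ^ (-(d:ℝ) / α)) (t * dist x z ^ (-(d:ℝ) - α)) *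
            (Φ (δ / dist x z) * (Ψ (dd D z / r) * l (dd D z / k))) := by ring
        _ ≤ min (t ^ (-(d:ℝ) / α)) (t * dist x z ^ (-(d:ℝ) - α)) *
            ((C6 * (min (δ/dist x z) 1) ^ q) *
              (K * ((1 + dist x z/δ) ^ P * (Ψ (δ/r) * l (δ/k))))) := by
            apply mul_le_mul_of_nonneg_left _ hm0
            exact mul_le_mul hφ hψl hψl0 hφb0
        _ = (K * C6) * ((min (t ^ (-(d:ℝ) / α)) (t * dist x z ^ (-(d:ℝ) - α)) *
              ((1 + dist x z/δ) ^ P * (min (δ/dist x z) 1) ^ q)) * G) := by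
            rw [hGdef]; ring
        _ ≤ (K * C6) * ((K₂ * (t ^ (-(d:ℝ)/α) * (1 + dist x z/T) ^ (-((d:ℝ)+η)))) * G) := by
            have hker' : min (t ^ (-(d:ℝ) / α)) (t * dist x z ^ (-(d:ℝ) - α)) *
                ((1 + dist x z/δ) ^ P * (min (δ/dist x z) 1) ^ q)
                ≤ K₂ * (t ^ (-(d:ℝ)/α) * (1 + dist x z/T) ^ (-((d:ℝ)+η))) := by
              rw [hK₂def]; exact hker
            exact mul_le_mul_of_nonneg_left
              (mul_le_mul_of_nonneg_right hker' hG0.le) hKC6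
        _ = g z := by
            rw [hgdef, hc₀def, hF₀def]
            simp only []
            rw [hnorm]
            ring
  -- chain of integral estimates
  have h0 : (0 : EuclideanSpace ℝ (Fin d) → ℝ) ≤ᵐ[volume.restrict S]
      (fun z => min (t ^ (-(d:ℝ) / α)) (t * dist x z ^ (-(d:ℝ) - α)) *
        Φ (δ / dist x z) * Ψ (dd D z / r) * l (dd D z / k)) := by
    refine (ae_restrict_iff' hSm).mpr (Filter.Eventually.of_forall fun z hz => ?_)
    simpa using hFnn z hz
  have hle : (fun z => min (t ^ (-(d:ℝ) / α)) (t * dist x z ^ (-(d:ℝ) - α)) *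
      Φ (δ / dist x z) * Ψ (dd D z / r) * l (dd D z / k)) ≤ᵐ[volume.restrict S] g := by
    refine (ae_restrict_iff' hSm).mpr (Filter.Eventually.of_forall fun z hz => ?_)
    exact hFg z hz
  have step1 := integral_mono_of_nonneg h0 (hgint.restrict) hle
  have step2 : (∫ z in S, g z) ≤ ∫ z, g z :=
    setIntegral_le_integral (s := S) hgint (Filter.Eventually.of_forall hgnn)
  have hTd1 : t ^ (-(d:ℝ)/α) * T ^ d = 1 := by
    rw [← Real.rpow_natCast T d, hTdef, ← Real.rpow_mul ht.le, ← Real.rpow_add ht,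
      show -(d:ℝ)/α + 1/α*(d:ℕ) = 0 by push_cast; ring, Real.rpow_zero]
  have step3 : ∫ z, g z = (K * C6 * K₂ * κ) * G := by
    rw [hgdef]
    rw [MeasureTheory.integral_const_mul]
    have e1 : (∫ z : EuclideanSpace ℝ (Fin d), F₀ (T⁻¹ • (z - x)))
        = ∫ z : EuclideanSpace ℝ (Fin d), F₀ (T⁻¹ • z) := by
      rw [show (fun z : EuclideanSpace ℝ (Fin d) => F₀ (T⁻¹ • (z - x)))
        = fun z : EuclideanSpace ℝ (Fin d) => F₀ (T⁻¹ • (z + -x)) by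
          funext z; rw [sub_eq_add_neg]]
      exact integral_add_right_eq_self (μ := volume)
        (fun z : EuclideanSpace ℝ (Fin d) => F₀ (T⁻¹ • z)) (-x)
    have e2 : (∫ z : EuclideanSpace ℝ (Fin d), F₀ (T⁻¹ • z)) = T ^ d * κ := by
      rw [MeasureTheory.Measure.integral_comp_inv_smul
        (volume : Measure (EuclideanSpace ℝ (Fin d))) F₀ T,
        finrank_euclideanSpace_fin, abs_of_pos (pow_pos hT0 d), smul_eq_mul, hκdef]
    rw [e1, e2, hc₀def]
    calc K * C6 * K₂ * t ^ (-(d:ℝ)/α) * G * (T ^ d * κ)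
        = (K * C6 * K₂ * κ * G) * (t ^ (-(d:ℝ)/α) * T ^ d) := by ring
      _ = (K * C6 * K₂ * κ) * G := by rw [hTd1]; ring
  calc (∫ z in S, min (t ^ (-(d:ℝ) / α)) (t * dist x z ^ (-(d:ℝ) - α)) *
        Φ (δ / dist x z) * Ψ (dd D z / r) * l (dd D z / k))
      ≤ ∫ z in S, g z := step1
    _ ≤ ∫ z, g z := step2
    _ = (K * C6 * K₂ * κ) * G := step3
    _ ≤ (K * C6 * K₂ * κ + 1) * G := by
        rw [add_mul, one_mul]
        linarith
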